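/- Let L be a modular lattice of finite length with a Boolean sublattice L₀ with atoms e₁,...,eₙ and the same 0 and 1 as L. For x ∈ L, with support component [x]_i = (x + êᵢ)·eᵢ, one has ∑_{i=1}^{n} [x]_i ≥ x and moreover [x]_i is the minimal choice: for any tuple (x₁,...,xₙ) with xᵢ ≤ eᵢ and x ≤ ∑ᵢ xᵢ, we have [x]_i ≤ xᵢ for every i. -/

import Mathlib

open Finset

/-- `ê i`: the join of all the atoms `e j`, `j ≠ i`. -/
def hatE {L : Type*} [Lattice L] [OrderBot L] {n : ℕ} (e : Fin n → L) (i : Fin n) : L :=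
  ((univ : Finset (Fin n)).erase i).sup e

/-- The `i`-th component of the support: `[x]ᵢ = (x ⊔ êᵢ) ⊓ eᵢ`. -/
def sc {L : Type*} [Lattice L] [OrderBot L] {n : ℕ} (e : Fin n → L) (x : L) (i : Fin n) : L :=
  (x ⊔ hatE e i) ⊓ e i

/-- **Well-definedness of the support (§4).** Let `L` be a modular lattice of finite length,
`L₀` a Boolean sublattice with atoms `e₁, …, eₙ` and the same `⊥` and `⊤` as `L` (so
`⨆ᵢ eᵢ = ⊤` and `eᵢ ⊓ êᵢ = ⊥`). Then, with `[x]ᵢ = (x ⊔ êᵢ) ⊓ eᵢ`, one has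
`x ≤ ⨆ᵢ [x]ᵢ`, and for any tuple `(x₁, …, xₙ)` with `xᵢ ≤ eᵢ` and `x ≤ ⨆ᵢ xᵢ` we have
`[x]ᵢ ≤ xᵢ` for every `i`; i.e. `([x]₁, …, [x]ₙ)` is the minimal covering tuple. -/
theorem support_isLeast {L : Type*} [Lattice L] [BoundedOrder L] [IsModularLattice L]
    [WellFoundedLT L] [WellFoundedGT L] {n : ℕ} (e : Fin n → L)
    (hne : ∀ i, e i ≠ ⊥)
    (hsup : (univ : Finset (Fin n)).sup e = ⊤)
    (hindep : ∀ i, e i ⊓ hatE e i = ⊥)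
    (x : L) :
    x ≤ (univ : Finset (Fin n)).sup (sc e x) ∧
    ∀ t : Fin n → L, (∀ i, t i ≤ e i) → x ≤ (univ : Finset (Fin n)).sup t →
      ∀ i, sc e x i ≤ t i := by
  -- key: e i ⊔ hatE e i = ⊤
  have htop : ∀ i, e i ⊔ hatE e i = ⊤ := by
    intro i
    rw [hatE, ← Finset.sup_insert, Finset.insert_erase (Finset.mem_univ i), hsup]
  -- key: sc e x i ⊔ hatE e i = x ⊔ hatE e i
  have hkey : ∀ i, sc e x i ⊔ hatE e i = x ⊔ hatE e i := by
    intro i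
    rw [sc, sup_comm, inf_comm, ← sup_inf_assoc_of_le (e i) le_sup_right,
      sup_comm (hatE e i) (e i), htop, top_inf_eq, sup_comm]
  constructor
  · -- by induction: ∀ S, x ≤ S.sup (sc e x) ⊔ (univ \ S).sup e
    have main : ∀ S : Finset (Fin n), x ≤ S.sup (sc e x) ⊔ (univ \ S).sup e := by
      intro S
      induction S using Finset.induction_on with
      | empty =>
        simp [hsup]
      | insert i S hiS ih =>
        have hsplit : (univ \ S : Finset (Fin n)) = insert i (univ \ insert i S) := by
          rw [Finset.sdiff_insert]
          rw [Finset.insert_erase]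
          simp [hiS]
        set a := S.sup (sc e x) ⊔ (univ \ insert i S).sup e with ha
        have h1 : x ≤ a ⊔ e i := by
          refine ih.trans ?_
          rw [hsplit, Finset.sup_insert, ha]
          rw [sup_comm (e i) _, sup_assoc]
        have hale : a ≤ sc e x i ⊔ hatE e i := by
          refine sup_le ?_ ?_ |>.trans le_sup_right
          · refine Finset.sup_le fun j hj => ?_
            have hji : j ≠ i := fun h => hiS (h ▸ hj)
            exact le_trans inf_le_right
              (Finset.le_sup (Finset.mem_erase.mpr ⟨hji, Finset.mem_univ j⟩))
          · refine Finset.sup_le fun j hj => ?_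
            have hji : j ≠ i := by
              simp only [Finset.mem_sdiff, Finset.mem_insert] at hj
              tauto
            exact Finset.le_sup (Finset.mem_erase.mpr ⟨hji, Finset.mem_univ j⟩)
        have h2 : x ≤ sc e x i ⊔ hatE e i := by
          rw [hkey i]; exact le_sup_left
        have h3 : x ≤ (a ⊔ e i) ⊓ (sc e x i ⊔ hatE e i) := le_inf h1 h2
        have h4 : (a ⊔ e i) ⊓ (sc e x i ⊔ hatE e i)
            = a ⊔ e i ⊓ (sc e x i ⊔ hatE e i) := sup_inf_assoc_of_le _ hale
        have h5 : e i ⊓ (sc e x i ⊔ hatE e i) = sc e x i := by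
          rw [hkey i, inf_comm, sc]
        rw [h4, h5] at h3
        refine h3.trans (sup_le (sup_le ?_ ?_) ?_)
        · exact ((Finset.sup_mono (Finset.subset_insert i S)).trans le_sup_left)
        · exact le_sup_right
        · exact (Finset.le_sup (Finset.mem_insert_self i S)).trans le_sup_left
    have := main univ
    simpa using this
  · intro t ht hxt i
    have h1 : (univ : Finset (Fin n)).sup t ≤ t i ⊔ hatE e i := by
      refine Finset.sup_le fun j _ => ?_
      by_cases hji : j = i
      · subst hji; exact le_sup_left
      · exact ((ht j).trans
          (Finset.le_sup (Finset.mem_erase.mpr ⟨hji, Finset.mem_univ j⟩))).trans le_sup_right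
    calc sc e x i ≤ (t i ⊔ hatE e i) ⊓ e i := by
          refine inf_le_inf_right _ (sup_le (hxt.trans h1) le_sup_right)
      _ = t i ⊔ hatE e i ⊓ e i := sup_inf_assoc_of_le _ (ht i)
      _ = t i := by rw [inf_comm, hindep i, sup_bot_eq]
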